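/- Let n be an odd positive integer. Then there do not exist nonzero square elements γ₁, γ₂, γ₃, γ₄ in GF(3^n) satisfying γ₁ + γ₂ = γ₃ + γ₄ and γ₁² + γ₂² + γ₃² + γ₄² = 0. -/
import Mathlib


instance : Fact (Nat.Prime 3) := ⟨by norm_num⟩

lemma aux_neg_one_square {F : Type*} [Field F] {t c : F} (hc : c ≠ 0)
    (h : t * t + c ^ 2 = 0) : IsSquare (-1 : F) := by
  refine ⟨t * c⁻¹, ?_⟩
  field_simp
  linear_combination -h

lemma aux_pow_mod (k : ℕ) : 3 ^ (2 * k + 1) % 4 = 3 := by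
  induction k with
  | zero => rfl
  | succ m ih =>
    have : 2 * (m + 1) + 1 = (2 * m + 1) + 2 := by ring
    rw [this, pow_add, Nat.mul_mod, ih]
    rfl

theorem stmt_18 (n : ℕ) (hn : 0 < n) (hodd : Odd n) :
    ¬ ∃ γ₁ γ₂ γ₃ γ₄ : GaloisField 3 n,
        (γ₁ ≠ 0 ∧ IsSquare γ₁) ∧ (γ₂ ≠ 0 ∧ IsSquare γ₂) ∧
        (γ₃ ≠ 0 ∧ IsSquare γ₃) ∧ (γ₄ ≠ 0 ∧ IsSquare γ₄) ∧
        γ₁ + γ₂ = γ₃ + γ₄ ∧ γ₁ ^ 2 + γ₂ ^ 2 + γ₃ ^ 2 + γ₄ ^ 2 = 0 := by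
  rintro ⟨γ₁, γ₂, γ₃, γ₄, ⟨h1ne, δ, h1⟩, ⟨h2ne, ε, h2⟩, ⟨h3ne, t, ht⟩, ⟨h4ne, h4sq⟩,
    hsum, hsq⟩
  haveI : Fintype (GaloisField 3 n) := Fintype.ofFinite _
  -- -1 is not a square
  have hneg : ¬ IsSquare (-1 : GaloisField 3 n) := by
    rw [FiniteField.isSquare_neg_one_iff]
    push_neg
    have hcard : Fintype.card (GaloisField 3 n) = 3 ^ n := by
      rw [← Nat.card_eq_fintype_card, GaloisField.card 3 n hn.ne']
    rw [hcard]
    obtain ⟨k, hk⟩ := hodd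
    rw [hk]
    exact aux_pow_mod k
  have h3 : (3 : GaloisField 3 n) = 0 := by
    exact_mod_cast CharP.cast_eq_zero (GaloisField 3 n) 3
  have hγ4 : γ₄ = δ * δ + ε * ε - γ₃ := by linear_combination - hsum + h1 + h2
  subst h1 h2 hγ4
  have key : (γ₃ + (δ - ε) ^ 2) * (γ₃ + (δ + ε) ^ 2) = 0 := by
    linear_combination -hsq + (γ₃ ^ 2 + δ ^ 4 + ε ^ 4) * h3
  rcases mul_eq_zero.mp key with hk | hk
  · have hc : δ - ε ≠ 0 := by
      intro h0
      apply h3ne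
      rw [h0] at hk
      simpa using hk
    exact hneg (aux_neg_one_square (t := t) hc (by linear_combination hk - ht))
  · have hc : δ + ε ≠ 0 := by
      intro h0
      apply h3ne
      rw [h0] at hk
      simpa using hk
    exact hneg (aux_neg_one_square (t := t) hc (by linear_combination hk - ht))
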